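/- For every integer n ≥ 2 and every real data vector (f_r)_{r=-n}^{n}, the function R(β₀,β₁,β₂,β₃) = ∑_{r=-n}^{n} (f_r − β₀ − β₁r − β₂r² − β₃r³)² attains its unique global minimum over ℝ⁴ at the point defined by β₃ = ∑_{r=-n}^{n} [35(5r³ − 3n²r − 3nr + r)/(n(n²−1)(n+2)(4n²−1)(2n+3))] f_r, β₂ = ∑_{r=-n}^{n} [15(3r² − n² − n)/(n(n+1)(4n²−1)(2n+3))] f_r, β₁ = ∑_{r=-n}^{n} [3r/(n(n+1)(2n+1))] f_r − (1/5)(3n²+3n−1)β₃, and β₀ = (1/(2n+1)) ∑_{r=-n}^{n} f_r − (1/3)n(n+1)β₂. (Proposition 2.3) -/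

import Mathlib

lemma pow_sums (n : ℤ) (hn : 0 ≤ n) :
    (∑ r ∈ Finset.Icc (-n) n, (1:ℝ)) = 2*(n:ℝ)+1 ∧
    (∑ r ∈ Finset.Icc (-n) n, (r:ℝ)) = 0 ∧
    (∑ r ∈ Finset.Icc (-n) n, (r:ℝ)^2) = (n:ℝ)*((n:ℝ)+1)*(2*(n:ℝ)+1)/3 ∧
    (∑ r ∈ Finset.Icc (-n) n, (r:ℝ)^3) = 0 ∧
    (∑ r ∈ Finset.Icc (-n) n, (r:ℝ)^4)
      = (n:ℝ)*((n:ℝ)+1)*(2*(n:ℝ)+1)*(3*(n:ℝ)^2+3*(n:ℝ)-1)/15 ∧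
    (∑ r ∈ Finset.Icc (-n) n, (r:ℝ)^5) = 0 ∧
    (∑ r ∈ Finset.Icc (-n) n, (r:ℝ)^6)
      = (n:ℝ)*((n:ℝ)+1)*(2*(n:ℝ)+1)*(3*(n:ℝ)^4+6*(n:ℝ)^3-3*(n:ℝ)+1)/21 := by
  obtain ⟨m, rfl⟩ := Int.eq_ofNat_of_zero_le hn
  clear hn
  induction m with
  | zero => norm_num
  | succ k ih =>
    obtain ⟨i0,i1,i2,i3,i4,i5,i6⟩ := ih
    have hset : Finset.Icc (-((k:ℤ)+1)) ((k:ℤ)+1)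
        = insert (-((k:ℤ)+1)) (insert ((k:ℤ)+1) (Finset.Icc (-(k:ℤ)) (k:ℤ))) := by
      ext x
      simp only [Finset.mem_Icc, Finset.mem_insert]
      omega
    have h1 : (-((k:ℤ)+1)) ∉ insert ((k:ℤ)+1) (Finset.Icc (-(k:ℤ)) (k:ℤ)) := by
      simp only [Finset.mem_Icc, Finset.mem_insert]; omega
    have h2 : ((k:ℤ)+1) ∉ Finset.Icc (-(k:ℤ)) (k:ℤ) := by
      simp only [Finset.mem_Icc]; omega
    have hcast : ((k+1 : ℕ) : ℤ) = (k:ℤ)+1 := by push_cast; ring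
    rw [hcast]
    refine ⟨?_, ?_, ?_, ?_, ?_, ?_, ?_⟩ <;>
      (rw [hset, Finset.sum_insert h1, Finset.sum_insert h2]) <;>
      first
        | (rw [i0]; push_cast; ring)
        | (rw [i1]; push_cast; ring)
        | (rw [i2]; push_cast; ring)
        | (rw [i3]; push_cast; ring)
        | (rw [i4]; push_cast; ring)
        | (rw [i5]; push_cast; ring)
        | (rw [i6]; push_cast; ring)



set_option maxHeartbeats 1000000 in
/-- Proposition 2.3: ordinary least squares fitting of a cubic polynomial to the
2n+1 observations `(r, f r)`, `r = -n, …, n`, attains its unique global minimum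
at the point `(β₀, β₁, β₂, β₃)` given by the stated explicit formulas. -/
theorem stmt_2 (n : ℤ) (hn : 2 ≤ n) (f : ℤ → ℝ)
    (β0 β1 β2 β3 : ℝ)
    (hβ3 : β3 = ∑ r ∈ Finset.Icc (-n) n,
      35 * (5 * (r : ℝ) ^ 3 - 3 * (n : ℝ) ^ 2 * (r : ℝ) - 3 * (n : ℝ) * (r : ℝ) + (r : ℝ)) /
        ((n : ℝ) * ((n : ℝ) ^ 2 - 1) * ((n : ℝ) + 2) * (4 * (n : ℝ) ^ 2 - 1)
          * (2 * (n : ℝ) + 3)) * f r)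
    (hβ2 : β2 = ∑ r ∈ Finset.Icc (-n) n,
      15 * (3 * (r : ℝ) ^ 2 - (n : ℝ) ^ 2 - (n : ℝ)) /
        ((n : ℝ) * ((n : ℝ) + 1) * (4 * (n : ℝ) ^ 2 - 1) * (2 * (n : ℝ) + 3)) * f r)
    (hβ1 : β1 = (∑ r ∈ Finset.Icc (-n) n,
      3 * (r : ℝ) / ((n : ℝ) * ((n : ℝ) + 1) * (2 * (n : ℝ) + 1)) * f r)
      - 1 / 5 * (3 * (n : ℝ) ^ 2 + 3 * (n : ℝ) - 1) * β3)
    (hβ0 : β0 = (1 / (2 * (n : ℝ) + 1)) * (∑ r ∈ Finset.Icc (-n) n, f r)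
      - 1 / 3 * (n : ℝ) * ((n : ℝ) + 1) * β2) :
    ∀ b0 b1 b2 b3 : ℝ, (b0, b1, b2, b3) ≠ (β0, β1, β2, β3) →
      (∑ r ∈ Finset.Icc (-n) n,
        (f r - β0 - β1 * (r : ℝ) - β2 * (r : ℝ) ^ 2 - β3 * (r : ℝ) ^ 3) ^ 2) <
      (∑ r ∈ Finset.Icc (-n) n,
        (f r - b0 - b1 * (r : ℝ) - b2 * (r : ℝ) ^ 2 - b3 * (r : ℝ) ^ 3) ^ 2) := by
  intro b0 b1 b2 b3 hne
  set S := Finset.Icc (-n) n with hS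
  obtain ⟨s0, s1, s2, s3, s4, s5, s6⟩ := pow_sums n (by omega)
  -- positivity of all denominator factors
  have hnR : (2:ℝ) ≤ (n:ℝ) := by exact_mod_cast hn
  have d1 : (n:ℝ) ≠ 0 := by intro h; linarith
  have d2 : (n:ℝ) + 1 ≠ 0 := by intro h; linarith
  have d3 : (n:ℝ) - 1 ≠ 0 := by intro h; linarith
  have d4 : (n:ℝ) + 2 ≠ 0 := by intro h; linarith
  have d5 : 2*(n:ℝ) + 1 ≠ 0 := by intro h; linarith
  have d6 : 2*(n:ℝ) - 1 ≠ 0 := by intro h; linarith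
  have d7 : 2*(n:ℝ) + 3 ≠ 0 := by intro h; linarith
  have hsq : (4:ℝ) ≤ (n:ℝ)^2 := by
    calc (4:ℝ) = 2*2 := by norm_num
      _ ≤ (n:ℝ)*(n:ℝ) := mul_le_mul hnR hnR (by norm_num) (by linarith)
      _ = (n:ℝ)^2 := by ring
  have d8 : (n:ℝ)^2 - 1 ≠ 0 := by intro h; linarith
  have d9 : 4*(n:ℝ)^2 - 1 ≠ 0 := by intro h; linarith
  -- moments
  set M0 := ∑ r ∈ S, f r with hM0
  set M1 := ∑ r ∈ S, f r * (r:ℝ) with hM1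
  set M2 := ∑ r ∈ S, f r * (r:ℝ)^2 with hM2
  set M3 := ∑ r ∈ S, f r * (r:ℝ)^3 with hM3
  -- beta in terms of moments
  have hb3 : β3 = 175 / ((n:ℝ) * ((n:ℝ)^2 - 1) * ((n:ℝ) + 2) * (4*(n:ℝ)^2 - 1) * (2*(n:ℝ)+3)) * M3
      - 35 * (3*(n:ℝ)^2 + 3*(n:ℝ) - 1)
        / ((n:ℝ) * ((n:ℝ)^2 - 1) * ((n:ℝ) + 2) * (4*(n:ℝ)^2 - 1) * (2*(n:ℝ)+3)) * M1 := by
    rw [hβ3, hM3, hM1, Finset.mul_sum, Finset.mul_sum, ← Finset.sum_sub_distrib]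
    exact Finset.sum_congr rfl fun r _ => by ring
  have hb2 : β2 = 45 / ((n:ℝ) * ((n:ℝ) + 1) * (4*(n:ℝ)^2 - 1) * (2*(n:ℝ)+3)) * M2
      - 15 * ((n:ℝ)^2 + (n:ℝ))
        / ((n:ℝ) * ((n:ℝ) + 1) * (4*(n:ℝ)^2 - 1) * (2*(n:ℝ)+3)) * M0 := by
    rw [hβ2, hM2, hM0, Finset.mul_sum, Finset.mul_sum, ← Finset.sum_sub_distrib]
    exact Finset.sum_congr rfl fun r _ => by ring
  have hb1 : β1 = 3 / ((n:ℝ) * ((n:ℝ) + 1) * (2*(n:ℝ)+1)) * M1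
      - 1/5 * (3*(n:ℝ)^2 + 3*(n:ℝ) - 1) * β3 := by
    rw [hβ1, hM1, Finset.mul_sum]
    congr 1
    exact Finset.sum_congr rfl fun r _ => by ring
  -- normal equations
  have hN0 : ∑ r ∈ S, (f r - β0 - β1 * (r:ℝ) - β2 * (r:ℝ)^2 - β3 * (r:ℝ)^3) = 0 := by
    have step : ∀ r ∈ S, f r - β0 - β1 * (r:ℝ) - β2 * (r:ℝ)^2 - β3 * (r:ℝ)^3
        = f r - β0 * 1 - β1 * (r:ℝ) - β2 * (r:ℝ)^2 - β3 * (r:ℝ)^3 := fun r _ => by ring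
    rw [Finset.sum_congr rfl step]
    simp only [Finset.sum_sub_distrib, ← Finset.mul_sum]
    rw [← hM0, s0, s1, s2, s3, hβ0]
    field_simp
    ring
  have hN1 : ∑ r ∈ S, (f r - β0 - β1 * (r:ℝ) - β2 * (r:ℝ)^2 - β3 * (r:ℝ)^3) * (r:ℝ) = 0 := by
    have step : ∀ r ∈ S, (f r - β0 - β1 * (r:ℝ) - β2 * (r:ℝ)^2 - β3 * (r:ℝ)^3) * (r:ℝ)
        = f r * (r:ℝ) - β0 * (r:ℝ) - β1 * (r:ℝ)^2 - β2 * (r:ℝ)^3 - β3 * (r:ℝ)^4 :=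
      fun r _ => by ring
    rw [Finset.sum_congr rfl step]
    simp only [Finset.sum_sub_distrib, ← Finset.mul_sum]
    rw [← hM1, s1, s2, s3, s4, hb1, hb3]
    field_simp
    ring
  have hN2 : ∑ r ∈ S, (f r - β0 - β1 * (r:ℝ) - β2 * (r:ℝ)^2 - β3 * (r:ℝ)^3) * (r:ℝ)^2 = 0 := by
    have step : ∀ r ∈ S, (f r - β0 - β1 * (r:ℝ) - β2 * (r:ℝ)^2 - β3 * (r:ℝ)^3) * (r:ℝ)^2
        = f r * (r:ℝ)^2 - β0 * (r:ℝ)^2 - β1 * (r:ℝ)^3 - β2 * (r:ℝ)^4 - β3 * (r:ℝ)^5 :=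
      fun r _ => by ring
    rw [Finset.sum_congr rfl step]
    simp only [Finset.sum_sub_distrib, ← Finset.mul_sum]
    rw [← hM2, s2, s3, s4, s5, hβ0, hb2]
    rw [show 4*(n:ℝ)^2 - 1 = (2*(n:ℝ)-1)*(2*(n:ℝ)+1) by ring]
    field_simp
    ring
  have hN3 : ∑ r ∈ S, (f r - β0 - β1 * (r:ℝ) - β2 * (r:ℝ)^2 - β3 * (r:ℝ)^3) * (r:ℝ)^3 = 0 := by
    have step : ∀ r ∈ S, (f r - β0 - β1 * (r:ℝ) - β2 * (r:ℝ)^2 - β3 * (r:ℝ)^3) * (r:ℝ)^3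
        = f r * (r:ℝ)^3 - β0 * (r:ℝ)^3 - β1 * (r:ℝ)^4 - β2 * (r:ℝ)^5 - β3 * (r:ℝ)^6 :=
      fun r _ => by ring
    rw [Finset.sum_congr rfl step]
    simp only [Finset.sum_sub_distrib, ← Finset.mul_sum]
    rw [← hM3, s3, s4, s5, s6, hb1, hb3]
    rw [show 4*(n:ℝ)^2 - 1 = (2*(n:ℝ)-1)*(2*(n:ℝ)+1) by ring, show (n:ℝ)^2 - 1 = ((n:ℝ)-1)*((n:ℝ)+1) by ring]
    have d6' : (n:ℝ)*2 - 1 ≠ 0 := by intro h; linarith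
    field_simp
    ring
  -- decomposition of the objective
  have key : ∀ r ∈ S, (f r - b0 - b1 * (r:ℝ) - b2 * (r:ℝ)^2 - b3 * (r:ℝ)^3) ^ 2
      = (f r - β0 - β1 * (r:ℝ) - β2 * (r:ℝ)^2 - β3 * (r:ℝ)^3) ^ 2
        + ((β0-b0) + (β1-b1) * (r:ℝ) + (β2-b2) * (r:ℝ)^2 + (β3-b3) * (r:ℝ)^3) ^ 2
        + (2*(β0-b0)) * (f r - β0 - β1 * (r:ℝ) - β2 * (r:ℝ)^2 - β3 * (r:ℝ)^3)
        + (2*(β1-b1)) * ((f r - β0 - β1 * (r:ℝ) - β2 * (r:ℝ)^2 - β3 * (r:ℝ)^3) * (r:ℝ))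
        + (2*(β2-b2)) * ((f r - β0 - β1 * (r:ℝ) - β2 * (r:ℝ)^2 - β3 * (r:ℝ)^3) * (r:ℝ)^2)
        + (2*(β3-b3)) * ((f r - β0 - β1 * (r:ℝ) - β2 * (r:ℝ)^2 - β3 * (r:ℝ)^3) * (r:ℝ)^3) :=
    fun r _ => by ring
  have hsplit : (∑ r ∈ S, (f r - b0 - b1 * (r:ℝ) - b2 * (r:ℝ)^2 - b3 * (r:ℝ)^3) ^ 2)
      = (∑ r ∈ S, (f r - β0 - β1 * (r:ℝ) - β2 * (r:ℝ)^2 - β3 * (r:ℝ)^3) ^ 2)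
        + ∑ r ∈ S, ((β0-b0) + (β1-b1) * (r:ℝ) + (β2-b2) * (r:ℝ)^2 + (β3-b3) * (r:ℝ)^3) ^ 2 := by
    rw [Finset.sum_congr rfl key]
    simp only [Finset.sum_add_distrib, ← Finset.mul_sum]
    rw [hN0, hN1, hN2, hN3]
    ring
  rw [hsplit]
  have hpos : 0 < ∑ r ∈ S, ((β0-b0) + (β1-b1) * (r:ℝ) + (β2-b2) * (r:ℝ)^2 + (β3-b3) * (r:ℝ)^3) ^ 2 := by
    have hnn : (0:ℝ) ≤ ∑ r ∈ S, ((β0-b0) + (β1-b1) * (r:ℝ) + (β2-b2) * (r:ℝ)^2 + (β3-b3) * (r:ℝ)^3) ^ 2 :=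
      Finset.sum_nonneg fun r _ => sq_nonneg _
    rcases lt_or_eq_of_le hnn with h | h
    · exact h
    exfalso
    have hz : ∀ r ∈ S, ((β0-b0) + (β1-b1) * (r:ℝ) + (β2-b2) * (r:ℝ)^2 + (β3-b3) * (r:ℝ)^3) ^ 2 = 0 :=
      (Finset.sum_eq_zero_iff_of_nonneg fun r _ => sq_nonneg _).mp h.symm
    have hv : ∀ r : ℤ, r ∈ S →
        (β0-b0) + (β1-b1) * (r:ℝ) + (β2-b2) * (r:ℝ)^2 + (β3-b3) * (r:ℝ)^3 = 0 :=
      fun r hr => pow_eq_zero_iff (by norm_num) |>.mp (hz r hr)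
    have m0 : (0:ℤ) ∈ S := by rw [hS]; simp only [Finset.mem_Icc]; omega
    have m1 : (1:ℤ) ∈ S := by rw [hS]; simp only [Finset.mem_Icc]; omega
    have mm1 : (-1:ℤ) ∈ S := by rw [hS]; simp only [Finset.mem_Icc]; omega
    have m2 : (2:ℤ) ∈ S := by rw [hS]; simp only [Finset.mem_Icc]; omega
    have e0 := hv 0 m0
    have e1 := hv 1 m1
    have em1 := hv (-1) mm1
    have e2 := hv 2 m2
    push_cast at e0 e1 em1 e2
    apply hne
    have : b0 = β0 ∧ b1 = β1 ∧ b2 = β2 ∧ b3 = β3 := by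
      refine ⟨by linarith, by linarith, by linarith, by linarith⟩
    simp [this.1, this.2.1, this.2.2.1, this.2.2.2]
  linarith
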